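/- Let n ≥ 4 and let λ₁ = λ₂ > 0 with λ₃ = 0 (the planar symmetric top case). Then a matrix K in SO(n−1) satisfies ∃ Q ∈ SO(3) with Q Λ Kᵀ = Λ if and only if K is block diagonal of the form K = diag(A, B), where A is a 2 × 2 real orthogonal matrix occupying the upper-left 2 × 2 block, B is an (n−3) × (n−3) real orthogonal matrix occupying the lower-right block, det A · det B = 1, and all off-diagonal blocks are zero. -/

import Mathlib

/-- The `3 × (n-1)` matrix `Λ` with `Λ₁₁ = λ₁`, `Λ₂₂ = λ₂`, `Λ₃₃ = λ₃` and all other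
entries zero. -/
def Lam (n : ℕ) (l1 l2 l3 : ℝ) : Matrix (Fin 3) (Fin (n - 1)) ℝ :=
  Matrix.of fun i j => if (j : ℕ) = (i : ℕ) then ![l1, l2, l3] i else 0

/-- The `n × n` block diagonal matrix `diag(A, B)` built from an `a × a` block `A` and a
`b × b` block `B`, where `a + b = n`. -/
def embedBlocks {a b n : ℕ} (h : a + b = n) (A : Matrix (Fin a) (Fin a) ℝ)
    (B : Matrix (Fin b) (Fin b) ℝ) : Matrix (Fin n) (Fin n) ℝ :=
  Matrix.reindex (finSumFinEquiv.trans (finCongr h)) (finSumFinEquiv.trans (finCongr h))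
    (Matrix.fromBlocks A 0 0 B)

namespace Stmt9

lemma embed_apply {a b N : ℕ} (h : a + b = N) (A : Matrix (Fin a) (Fin a) ℝ)
    (B : Matrix (Fin b) (Fin b) ℝ) (x y : Fin a ⊕ Fin b) :
    embedBlocks h A B ((finSumFinEquiv.trans (finCongr h)) x)
      ((finSumFinEquiv.trans (finCongr h)) y) = Matrix.fromBlocks A 0 0 B x y := by
  simp [embedBlocks]

lemma embed_det {a b N : ℕ} (h : a + b = N) (A : Matrix (Fin a) (Fin a) ℝ)
    (B : Matrix (Fin b) (Fin b) ℝ) :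
    (embedBlocks h A B).det = A.det * B.det := by
  rw [embedBlocks, Matrix.det_reindex_self, Matrix.det_fromBlocks_zero₂₁]

lemma ev_l {a b N : ℕ} (h : a + b = N) (p : Fin a) :
    (((finSumFinEquiv.trans (finCongr h)) (Sum.inl p) : Fin N) : ℕ) = (p : ℕ) := by
  simp

lemma ev_r {a b N : ℕ} (h : a + b = N) (p : Fin b) :
    (((finSumFinEquiv.trans (finCongr h)) (Sum.inr p) : Fin N) : ℕ) = a + (p : ℕ) := by
  simp

lemma mulLam (n : ℕ) (hn : 4 ≤ n) (l : ℝ) (Q : Matrix (Fin 3) (Fin 3) ℝ)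
    (K : Matrix (Fin (n - 1)) (Fin (n - 1)) ℝ) (i : Fin 3) (j : Fin (n - 1)) :
    (Q * Lam n l l 0 * K.transpose) i j
      = l * (Q i 0 * K j ⟨0, by omega⟩ + Q i 1 * K j ⟨1, by omega⟩) := by
  have h1 : ∀ q : Fin (n - 1), (Q * Lam n l l 0) i q
      = Q i 0 * (if q = (⟨0, by omega⟩ : Fin (n-1)) then l else 0)
        + Q i 1 * (if q = (⟨1, by omega⟩ : Fin (n-1)) then l else 0) := by
    intro q
    rw [Matrix.mul_apply, Fin.sum_univ_three]
    have e0 : ((q : ℕ) = ((0 : Fin 3) : ℕ)) = (q = (⟨0, by omega⟩ : Fin (n-1))) := by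
      simp [Fin.ext_iff]
    have e1 : ((q : ℕ) = ((1 : Fin 3) : ℕ)) = (q = (⟨1, by omega⟩ : Fin (n-1))) := by
      simp [Fin.ext_iff]
    simp only [Lam, Matrix.of_apply, e0, e1]
    simp
  rw [Matrix.mul_apply]
  simp only [h1, Matrix.transpose_apply, add_mul]
  rw [Finset.sum_add_distrib]
  have s0 : ∑ q : Fin (n-1), Q i 0 * (if q = (⟨0, by omega⟩ : Fin (n-1)) then l else 0) * K j q
      = l * (Q i 0 * K j ⟨0, by omega⟩) := by
    rw [Finset.sum_eq_single (⟨0, by omega⟩ : Fin (n-1))]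
    · simp; ring
    · intro q _ hq; simp [hq]
    · simp
  have s1 : ∑ q : Fin (n-1), Q i 1 * (if q = (⟨1, by omega⟩ : Fin (n-1)) then l else 0) * K j q
      = l * (Q i 1 * K j ⟨1, by omega⟩) := by
    rw [Finset.sum_eq_single (⟨1, by omega⟩ : Fin (n-1))]
    · simp; ring
    · intro q _ hq; simp [hq]
    · simp
  rw [s0, s1]; ring

end Stmt9

open Stmt9

set_option maxHeartbeats 1600000

/-- Planar symmetric top case: for `n ≥ 4`, `λ₁ = λ₂ > 0` and `λ₃ = 0`, a matrix
`K ∈ SO(n-1)` satisfies `∃ Q ∈ SO(3), Q Λ Kᵀ = Λ` iff `K = diag(A, B)` with `A ∈ O(2)`,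
`B ∈ O(n-3)`, and `det A · det B = 1`. -/
theorem stmt_9 (n : ℕ) (hn : 4 ≤ n) (l : ℝ) (hl : 0 < l)
    (K : Matrix (Fin (n - 1)) (Fin (n - 1)) ℝ)
    (hK : K.transpose * K = 1 ∧ K.det = 1) :
    (∃ Q : Matrix (Fin 3) (Fin 3) ℝ,
        (Q.transpose * Q = 1 ∧ Q.det = 1) ∧
        Q * Lam n l l 0 * K.transpose = Lam n l l 0) ↔
      ∃ (A : Matrix (Fin 2) (Fin 2) ℝ) (B : Matrix (Fin (n - 3)) (Fin (n - 3)) ℝ),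
        A.transpose * A = 1 ∧
        B.transpose * B = 1 ∧
        A.det * B.det = 1 ∧
        K = embedBlocks (by omega : 2 + (n - 3) = n - 1) A B := by
  obtain ⟨hKo, hKdet⟩ := hK
  have hab : 2 + (n - 3) = n - 1 := by omega
  set e : Fin 2 ⊕ Fin (n - 3) ≃ Fin (n - 1) := finSumFinEquiv.trans (finCongr hab) with he
  set c0 : Fin (n - 1) := ⟨0, by omega⟩ with hc0
  set c1 : Fin (n - 1) := ⟨1, by omega⟩ with hc1
  have hc01 : c0 ≠ c1 := by simp [hc0, hc1, Fin.ext_iff]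
  have hc0v : (c0 : ℕ) = 0 := rfl
  have hc1v : (c1 : ℕ) = 1 := rfl
  have KtK : ∀ p q : Fin (n - 1), (∑ j, K j p * K j q) = if p = q then 1 else 0 := by
    intro p q
    have := congrFun (congrFun hKo p) q
    simpa [Matrix.mul_apply, Matrix.one_apply] using this
  have hKo' : K * K.transpose = 1 := mul_eq_one_comm.mp hKo
  have KKt : ∀ p q : Fin (n - 1), (∑ j, K p j * K q j) = if p = q then 1 else 0 := by
    intro p q
    have := congrFun (congrFun hKo' p) q
    simpa [Matrix.mul_apply, Matrix.one_apply] using this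
  constructor
  · rintro ⟨Q, ⟨hQo, hQdet⟩, hQl⟩
    have key : ∀ (i : Fin 3) (j : Fin (n - 1)),
        Q i 0 * K j c0 + Q i 1 * K j c1
          = if (j : ℕ) = (i : ℕ) ∧ (i : ℕ) < 2 then 1 else 0 := by
      intro i j
      have h := congrFun (congrFun hQl i) j
      rw [mulLam n hn l Q K i j] at h
      have hr : Lam n l l 0 i j = l * (if (j : ℕ) = (i : ℕ) ∧ (i : ℕ) < 2 then 1 else 0) := by
        fin_cases i <;> by_cases hj2 : (j : ℕ) = 2 <;>
          simp_all [Lam] <;> split <;> simp_all <;> omega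
      rw [hr] at h
      exact mul_left_cancel₀ (ne_of_gt hl) h
    -- Q 2 0 = 0 and Q 2 1 = 0
    have key2 : ∀ j, Q 2 0 * K j c0 + Q 2 1 * K j c1 = 0 := by
      intro j; rw [key 2 j]; norm_num
    have hQ20 : Q 2 0 = 0 := by
      have e2 : ∑ j, K j c0 * (Q 2 0 * K j c0 + Q 2 1 * K j c1) = 0 :=
        Finset.sum_eq_zero fun j _ => by rw [key2 j]; ring
      have e1 : ∑ j, K j c0 * (Q 2 0 * K j c0 + Q 2 1 * K j c1)
          = Q 2 0 * (∑ j, K j c0 * K j c0) + Q 2 1 * (∑ j, K j c0 * K j c1) := by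
        rw [Finset.mul_sum, Finset.mul_sum, ← Finset.sum_add_distrib]
        exact Finset.sum_congr rfl fun j _ => by ring
      rw [e1, KtK c0 c0, KtK c0 c1, if_pos rfl, if_neg hc01] at e2
      linarith
    have hQ21 : Q 2 1 = 0 := by
      have e2 : ∑ j, K j c1 * (Q 2 0 * K j c0 + Q 2 1 * K j c1) = 0 :=
        Finset.sum_eq_zero fun j _ => by rw [key2 j]; ring
      have e1 : ∑ j, K j c1 * (Q 2 0 * K j c0 + Q 2 1 * K j c1)
          = Q 2 0 * (∑ j, K j c1 * K j c0) + Q 2 1 * (∑ j, K j c1 * K j c1) := by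
        rw [Finset.mul_sum, Finset.mul_sum, ← Finset.sum_add_distrib]
        exact Finset.sum_congr rfl fun j _ => by ring
      rw [e1, KtK c1 c0, KtK c1 c1, if_pos rfl, if_neg (Ne.symm hc01)] at e2
      linarith
    -- Q column orthonormality facts
    have QtQ : ∀ p q : Fin 3, Q 0 p * Q 0 q + Q 1 p * Q 1 q + Q 2 p * Q 2 q
        = if p = q then 1 else 0 := by
      intro p q
      have := congrFun (congrFun hQo p) q
      simpa [Matrix.mul_apply, Fin.sum_univ_three, Matrix.one_apply] using this
    have hQo' : Q * Q.transpose = 1 := mul_eq_one_comm.mp hQo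
    have QQt : ∀ p q : Fin 3, Q p 0 * Q q 0 + Q p 1 * Q q 1 + Q p 2 * Q q 2
        = if p = q then 1 else 0 := by
      intro p q
      have := congrFun (congrFun hQo' p) q
      simpa [Matrix.mul_apply, Fin.sum_univ_three, Matrix.one_apply] using this
    have col00 : Q 0 0 * Q 0 0 + Q 1 0 * Q 1 0 = 1 := by
      have := QtQ 0 0; rw [hQ20] at this; simpa using this
    have col11 : Q 0 1 * Q 0 1 + Q 1 1 * Q 1 1 = 1 := by
      have := QtQ 1 1; rw [hQ21] at this; simpa using this
    have col01 : Q 0 0 * Q 0 1 + Q 1 0 * Q 1 1 = 0 := by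
      have := QtQ 0 1; rw [hQ20, hQ21] at this; simpa using this
    -- Q 2 2 ≠ 0, Q 0 2 = Q 1 2 = 0
    have row22 : Q 2 2 * Q 2 2 = 1 := by
      have := QQt 2 2; rw [hQ20, hQ21] at this; simpa using this
    have hQ02 : Q 0 2 = 0 := by
      have h := QQt 2 0; rw [hQ20, hQ21] at h; simp at h
      rcases h with h' | h'
      · exfalso; rw [h'] at row22; norm_num at row22
      · exact h'
    have hQ12 : Q 1 2 = 0 := by
      have h := QQt 2 1; rw [hQ20, hQ21] at h; simp at h
      rcases h with h' | h'
      · exfalso; rw [h'] at row22; norm_num at row22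
      · exact h'
    have row00 : Q 0 0 * Q 0 0 + Q 0 1 * Q 0 1 = 1 := by
      have := QQt 0 0; rw [hQ02] at this; simpa using this
    have row11 : Q 1 0 * Q 1 0 + Q 1 1 * Q 1 1 = 1 := by
      have := QQt 1 1; rw [hQ12] at this; simpa using this
    -- column formulas for K
    have key0 : ∀ j, Q 0 0 * K j c0 + Q 0 1 * K j c1 = if (j : ℕ) = 0 then 1 else 0 := by
      intro j; have := key 0 j; simpa using this
    have key1 : ∀ j, Q 1 0 * K j c0 + Q 1 1 * K j c1 = if (j : ℕ) = 1 then 1 else 0 := by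
      intro j; have := key 1 j; simpa using this
    have Kcol0 : ∀ j, K j c0
        = Q 0 0 * (if (j : ℕ) = 0 then 1 else 0) + Q 1 0 * (if (j : ℕ) = 1 then 1 else 0) := by
      intro j
      linear_combination Q 0 0 * key0 j + Q 1 0 * key1 j
        + (1 - Q 0 0 * Q 0 0 - Q 1 0 * Q 1 0) * (key0 j) * 0
        - K j c0 * col00 + K j c0 * 1 * 0 - K j c1 * col01
    have Kcol1 : ∀ j, K j c1
        = Q 0 1 * (if (j : ℕ) = 0 then 1 else 0) + Q 1 1 * (if (j : ℕ) = 1 then 1 else 0) := by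
      intro j
      linear_combination Q 0 1 * key0 j + Q 1 1 * key1 j
        - K j c1 * col11 - K j c0 * col01
    -- values at specific spots
    have Kc00 : K c0 c0 = Q 0 0 := by rw [Kcol0 c0]; norm_num [hc0]
    have Kc10 : K c1 c0 = Q 1 0 := by rw [Kcol0 c1]; norm_num [hc1]
    have Kc01 : K c0 c1 = Q 0 1 := by rw [Kcol1 c0]; norm_num [hc0]
    have Kc11 : K c1 c1 = Q 1 1 := by rw [Kcol1 c1]; norm_num [hc1]
    have Kcolz0 : ∀ j : Fin (n-1), (2 : ℕ) ≤ (j : ℕ) → K j c0 = 0 := by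
      intro j hj; rw [Kcol0 j]
      rw [if_neg (by omega), if_neg (by omega)]; ring
    have Kcolz1 : ∀ j : Fin (n-1), (2 : ℕ) ≤ (j : ℕ) → K j c1 = 0 := by
      intro j hj; rw [Kcol1 j]
      rw [if_neg (by omega), if_neg (by omega)]; ring
    -- row zero facts
    have rowz : ∀ p : Fin (n - 1), (p = c0 ∨ p = c1) →
        ∀ q, q ≠ c0 → q ≠ c1 → K p q = 0 := by
      intro p hp q hq0 hq1
      have hsum : ∑ j, K p j * K p j = 1 := by rw [KKt p p, if_pos rfl]
      have hfull : K p c0 * K p c0 + K p c1 * K p c1 = 1 := by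
        rcases hp with rfl | rfl
        · rw [Kc00, Kc01]; exact row00
        · rw [Kc10, Kc11]; exact row11
      have hmem : q ∈ (Finset.univ.erase c0).erase c1 := by
        simp [Finset.mem_erase, hq0, hq1]
      have hsplit : ∑ j, K p j * K p j
          = K p c0 * K p c0 + (K p c1 * K p c1
            + ∑ j ∈ (Finset.univ.erase c0).erase c1, K p j * K p j) := by
        rw [← Finset.add_sum_erase _ _ (Finset.mem_univ c0)]
        congr 1
        rw [← Finset.add_sum_erase _ _ (Finset.mem_erase.mpr ⟨Ne.symm hc01, Finset.mem_univ c1⟩)]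
      have hzero : ∑ j ∈ (Finset.univ.erase c0).erase c1, K p j * K p j = 0 := by
        rw [hsplit] at hsum; linarith [hfull]
      have := (Finset.sum_eq_zero_iff_of_nonneg
        (fun j _ => mul_self_nonneg (K p j))).mp hzero q hmem
      exact (mul_self_eq_zero).mp this
    -- e values
    have hel : ∀ p : Fin 2, ((e (Sum.inl p) : Fin (n - 1)) : ℕ) = (p : ℕ) := fun p => ev_l hab p
    have her : ∀ p : Fin (n - 3), ((e (Sum.inr p) : Fin (n - 1)) : ℕ) = 2 + (p : ℕ) :=
      fun p => ev_r hab p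
    have hel0 : e (Sum.inl 0) = c0 := by rw [Fin.ext_iff, hel 0]; simp [hc0]
    have hel1 : e (Sum.inl 1) = c1 := by rw [Fin.ext_iff, hel 1]; simp [hc1]
    -- helper zero facts indexed by Fin 2
    have hel01 : ∀ p : Fin 2, e (Sum.inl p) = c0 ∨ e (Sum.inl p) = c1 := by
      intro p; fin_cases p
      · left; exact hel0
      · right; exact hel1
    have hKrz : ∀ (p : Fin 2) (q : Fin (n - 3)),
        K (e (Sum.inl p)) (e (Sum.inr q)) = 0 := by
      intro p q
      refine rowz _ (hel01 p) _ ?_ ?_ <;>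
      · intro hcon
        have h2 := her q
        rw [hcon] at h2
        first
        | (rw [hc0v] at h2; omega)
        | (rw [hc1v] at h2; omega)
    have hKcz : ∀ (p : Fin (n - 3)) (q : Fin 2),
        K (e (Sum.inr p)) (e (Sum.inl q)) = 0 := by
      intro p q
      have h2 : (2 : ℕ) ≤ ((e (Sum.inr p) : Fin (n - 1)) : ℕ) := by rw [her p]; omega
      rcases hel01 q with h | h <;> rw [h]
      · exact Kcolz0 _ h2
      · exact Kcolz1 _ h2
    -- define A and B
    have hKeq : K = embedBlocks (by omega : 2 + (n - 3) = n - 1)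
        (Matrix.of fun p q => K (e (Sum.inl p)) (e (Sum.inl q)))
        (Matrix.of fun p q => K (e (Sum.inr p)) (e (Sum.inr q))) := by
      ext i j
      obtain ⟨x, rfl⟩ := e.surjective i
      obtain ⟨y, rfl⟩ := e.surjective j
      rw [show (embedBlocks (by omega : 2 + (n-3) = n-1) _ _ : Matrix _ _ ℝ) (e x) (e y)
            = Matrix.fromBlocks (Matrix.of fun p q => K (e (Sum.inl p)) (e (Sum.inl q))) 0 0
              (Matrix.of fun p q => K (e (Sum.inr p)) (e (Sum.inr q))) x y from embed_apply hab _ _ x y]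
      cases x with
      | inl p =>
        cases y with
        | inl q => simp [Matrix.fromBlocks]
        | inr q => simp [Matrix.fromBlocks, hKrz p q]
      | inr p =>
        cases y with
        | inl q => simp [Matrix.fromBlocks, hKcz p q]
        | inr q => simp [Matrix.fromBlocks]
    refine ⟨_, _, ?_, ?_, ?_, hKeq⟩
    -- AᵀA = 1
    case _ =>
      ext p q
      rw [Matrix.mul_apply]
      have hs := KtK (e (Sum.inl p)) (e (Sum.inl q))
      rw [← Equiv.sum_comp e (fun j => K j (e (Sum.inl p)) * K j (e (Sum.inl q))),
        Fintype.sum_sum_type] at hs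
      have hz : ∑ r : Fin (n - 3), K (e (Sum.inr r)) (e (Sum.inl p)) * K (e (Sum.inr r)) (e (Sum.inl q)) = 0 :=
        Finset.sum_eq_zero fun r _ => by rw [hKcz r p]; ring
      rw [hz, add_zero] at hs
      rw [show (∑ r : Fin 2, (Matrix.of fun p q => K (e (Sum.inl p)) (e (Sum.inl q))).transpose p r
            * (Matrix.of fun p q => K (e (Sum.inl p)) (e (Sum.inl q))) r q)
          = ∑ r : Fin 2, K (e (Sum.inl r)) (e (Sum.inl p)) * K (e (Sum.inl r)) (e (Sum.inl q)) from rfl]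
      rw [hs, Matrix.one_apply]
      simp
    -- BᵀB = 1
    case _ =>
      ext p q
      rw [Matrix.mul_apply]
      have hs := KtK (e (Sum.inr p)) (e (Sum.inr q))
      rw [← Equiv.sum_comp e (fun j => K j (e (Sum.inr p)) * K j (e (Sum.inr q))),
        Fintype.sum_sum_type] at hs
      have hz : ∑ r : Fin 2, K (e (Sum.inl r)) (e (Sum.inr p)) * K (e (Sum.inl r)) (e (Sum.inr q)) = 0 :=
        Finset.sum_eq_zero fun r _ => by rw [hKrz r p]; ring
      rw [hz, zero_add] at hs
      rw [show (∑ r : Fin (n-3), (Matrix.of fun p q => K (e (Sum.inr p)) (e (Sum.inr q))).transpose p r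
            * (Matrix.of fun p q => K (e (Sum.inr p)) (e (Sum.inr q))) r q)
          = ∑ r : Fin (n-3), K (e (Sum.inr r)) (e (Sum.inr p)) * K (e (Sum.inr r)) (e (Sum.inr q)) from rfl]
      rw [hs, Matrix.one_apply]
      simp
    -- det A * det B = 1
    case _ =>
      rw [hKeq, embed_det] at hKdet
      exact hKdet
  · rintro ⟨A, B, hA, hB, hdet, rfl⟩
    have hel : ∀ p : Fin 2, ((e (Sum.inl p) : Fin (n - 1)) : ℕ) = (p : ℕ) := fun p => ev_l hab p
    have her : ∀ p : Fin (n - 3), ((e (Sum.inr p) : Fin (n - 1)) : ℕ) = 2 + (p : ℕ) :=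
      fun p => ev_r hab p
    have hAAt : A * A.transpose = 1 := mul_eq_one_comm.mp hA
    have a00 : A 0 0 * A 0 0 + A 0 1 * A 0 1 = 1 := by
      have := congrFun (congrFun hAAt 0) 0
      simpa [Matrix.mul_apply, Fin.sum_univ_two, Matrix.one_apply] using this
    have a01 : A 0 0 * A 1 0 + A 0 1 * A 1 1 = 0 := by
      have := congrFun (congrFun hAAt 0) 1
      simpa [Matrix.mul_apply, Fin.sum_univ_two, Matrix.one_apply] using this
    have a11 : A 1 0 * A 1 0 + A 1 1 * A 1 1 = 1 := by
      have := congrFun (congrFun hAAt 1) 1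
      simpa [Matrix.mul_apply, Fin.sum_univ_two, Matrix.one_apply] using this
    have c00 : A 0 0 * A 0 0 + A 1 0 * A 1 0 = 1 := by
      have := congrFun (congrFun hA 0) 0
      simpa [Matrix.mul_apply, Fin.sum_univ_two, Matrix.one_apply] using this
    have c01 : A 0 0 * A 0 1 + A 1 0 * A 1 1 = 0 := by
      have := congrFun (congrFun hA 0) 1
      simpa [Matrix.mul_apply, Fin.sum_univ_two, Matrix.one_apply] using this
    have c11 : A 0 1 * A 0 1 + A 1 1 * A 1 1 = 1 := by
      have := congrFun (congrFun hA 1) 1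
      simpa [Matrix.mul_apply, Fin.sum_univ_two, Matrix.one_apply] using this
    have hd2 : A.det * A.det = 1 := by
      have := congrArg Matrix.det hA
      rwa [Matrix.det_mul, Matrix.det_transpose, Matrix.det_one] at this
    have hdfin : A.det = A 0 0 * A 1 1 - A 0 1 * A 1 0 := Matrix.det_fin_two A
    refine ⟨Matrix.of ![![A 0 0, A 0 1, 0], ![A 1 0, A 1 1, 0], ![0, 0, A.det]], ⟨?_, ?_⟩, ?_⟩
    · ext i j
      fin_cases i <;> fin_cases j <;>
        simp [Matrix.mul_apply, Fin.sum_univ_three, Matrix.one_apply] <;>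
        first
          | linear_combination c00
          | linear_combination c01
          | linear_combination c11
          | linear_combination hd2
    · rw [Matrix.det_fin_three]
      simp
      linear_combination hd2 - A.det * hdfin
    · ext i j
      rw [mulLam n hn l]
      obtain ⟨y, rfl⟩ := e.surjective j
      have h0 : (⟨0, by omega⟩ : Fin (n - 1)) = e (Sum.inl 0) := by
        rw [Fin.ext_iff, hel 0]; rfl
      have h1 : (⟨1, by omega⟩ : Fin (n - 1)) = e (Sum.inl 1) := by
        rw [Fin.ext_iff, hel 1]; rfl
      rw [h0, h1,
        show embedBlocks (by omega : 2 + (n - 3) = n - 1) A B (e y) (e (Sum.inl 0))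
          = Matrix.fromBlocks A 0 0 B y (Sum.inl 0) from embed_apply hab A B y _,
        show embedBlocks (by omega : 2 + (n - 3) = n - 1) A B (e y) (e (Sum.inl 1))
          = Matrix.fromBlocks A 0 0 B y (Sum.inl 1) from embed_apply hab A B y _]
      cases y with
      | inl p =>
        simp only [Matrix.fromBlocks_apply₁₁]
        have hev : ((e (Sum.inl p) : Fin (n - 1)) : ℕ) = (p : ℕ) := hel p
        fin_cases i <;> fin_cases p <;>
          simp_all [Lam] <;>
          first
            | linear_combination l * a00
            | linear_combination l * a01
            | linear_combination l * a11
            | (right; linear_combination a00)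
            | (right; linear_combination a01)
            | (right; linear_combination a11)
      | inr p =>
        simp only [Matrix.fromBlocks_apply₂₁, Matrix.zero_apply]
        rw [Lam]
        simp only [Matrix.of_apply, her p, mul_zero, add_zero, zero_add]
        by_cases hc : 2 + (p : ℕ) = (i : ℕ)
        · rw [if_pos hc]
          have hi : i = 2 := by
            have h3 := i.isLt
            apply Fin.ext
            show (i : ℕ) = 2
            omega
          subst hi; simp
        · rw [if_neg hc]
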